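/- Let G be a C^∞ Lie group modelled on I : ModelWithCorners ℝ E H and let S : G → Submodule ℝ E be a multiplicative distribution on G. Then S is left invariant: for every g : G, S g = Submodule.map (mfderiv I I (fun x => g * x) 1) (S 1), i.e. S(g) is the image of S(1) under the tangent map at the identity of the left translation by g. -/

import Mathlib

open Manifold

section aux

variable {E : Type*} [NormedAddCommGroup E] [NormedSpace ℝ E]
    {H : Type*} [TopologicalSpace H] (I : ModelWithCorners ℝ E H)
    {G : Type*} [TopologicalSpace G] [ChartedSpace H G] [Group G] [LieGroup I (⊤ : ℕ∞) G]

lemma mfderiv_mul_left_eq (g h : G) (w : E) :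
    mfderiv I I (fun x : G => g * x) h w =
      mfderiv (I.prod I) I (fun p : G × G => p.1 * p.2) (g, h)
        ((0, w) : TangentSpace (I.prod I) (g, h)) := by
  have hmul : MDifferentiableAt (I.prod I) I (fun p : G × G => p.1 * p.2) (g, h) :=
    (contMDiff_mul I ((⊤ : ℕ∞) : WithTop ℕ∞)).mdifferentiableAt (by simp)
  have hincl : MDifferentiableAt I (I.prod I) (fun x : G => (g, x)) h :=
    (mdifferentiableAt_const.prodMk mdifferentiableAt_id)
  have hcomp := mfderiv_comp h hmul hincl
  have : mfderiv I I (fun x : G => g * x) h =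
      (mfderiv (I.prod I) I (fun p : G × G => p.1 * p.2) (g, h)).comp
        (mfderiv I (I.prod I) (fun x : G => (g, x)) h) := hcomp
  rw [this, mfderiv_prod_right]
  rfl

lemma mfderiv_mul_left_comp (g : G) (w : E) :
    mfderiv I I (fun x : G => g * x) (g⁻¹ * g)
      (mfderiv I I (fun x : G => g⁻¹ * x) g w) = w := by
  have h1 : MDifferentiableAt I I (fun x : G => g * x) (g⁻¹ * g) :=
    (contMDiff_mul_left (I := I) (n := ((⊤ : ℕ∞) : WithTop ℕ∞)) (a := g)).mdifferentiableAt (by simp)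
  have h2 : MDifferentiableAt I I (fun x : G => g⁻¹ * x) g :=
    (contMDiff_mul_left (I := I) (n := ((⊤ : ℕ∞) : WithTop ℕ∞)) (a := g⁻¹)).mdifferentiableAt (by simp)
  have hcomp := mfderiv_comp g h1 h2
  have heq : ((fun x : G => g * x) ∘ fun x : G => g⁻¹ * x) = id := by
    funext x; simp [Function.comp]
  rw [heq, mfderiv_id] at hcomp
  have := congrArg (fun f => f w) hcomp.symm
  exact this

end aux

/-- A multiplicative distribution on a Lie group is left invariant: `S g` is the image
of `S 1` under the tangent map at the identity of the left translation by `g`. -/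
theorem stmt_5 {E : Type*} [NormedAddCommGroup E] [NormedSpace ℝ E]
    {H : Type*} [TopologicalSpace H] (I : ModelWithCorners ℝ E H)
    {G : Type*} [TopologicalSpace G] [ChartedSpace H G] [Group G] [LieGroup I (⊤ : ℕ∞) G]
    (S : G → Submodule ℝ E)
    (hS : ∀ (g h : G) (v w : E), v ∈ S g → w ∈ S h →
      mfderiv (I.prod I) I (fun p : G × G => p.1 * p.2) (g, h)
        ((v, w) : TangentSpace (I.prod I) (g, h)) ∈ S (g * h)) :
    ∀ g : G, S g = Submodule.map (mfderiv I I (fun x : G => g * x) 1).toLinearMap (S 1) := by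
  intro g
  apply le_antisymm
  · intro w hw
    refine ⟨mfderiv I I (fun x : G => g⁻¹ * x) g w, ?_, ?_⟩
    · have h := hS g⁻¹ g 0 w (zero_mem _) hw
      rw [inv_mul_cancel] at h
      rw [mfderiv_mul_left_eq I g⁻¹ g w]
      exact h
    · have := mfderiv_mul_left_comp I g w
      rwa [inv_mul_cancel] at this
  · rintro _ ⟨w, hw, rfl⟩
    have h := hS g 1 0 w (zero_mem _) hw
    rw [mul_one] at h
    have e := mfderiv_mul_left_eq I g 1 w
    exact e ▸ h
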